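/- The χ-gadget second-moment matrix is an exact 2-design projector: the 4×4 real matrix T_χ = M(3/5, 1/5), whose rows are (1,0,0,0), (0, 1/5, 1/5, √3/5), (0, 1/5, 1/5, √3/5), (0, √3/5, √3/5, 3/5), satisfies T_χ · T_χ = T_χ, is symmetric, and has trace 2; its eigenvalues (with multiplicity) are 1, 1, 0, 0. Hence T_χ is an orthogonal projection of rank 2, coinciding with the matrix representation of the 2-qubit Haar second-moment projector. -/

import Mathlib

open Matrix Polynomial

/-- The matrix representation `M(a,c)` of the second moment operator of an ironed gadget. -/
noncomputable def gadgetMatrix (a c : ℝ) : Matrix (Fin 4) (Fin 4) ℝ :=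
  !![1, 0, 0, 0;
     0, 1 - c - (3/2) * (1 - a), c, (Real.sqrt 3 / 2) * (1 - a);
     0, c, 1 - c - (3/2) * (1 - a), (Real.sqrt 3 / 2) * (1 - a);
     0, (Real.sqrt 3 / 2) * (1 - a), (Real.sqrt 3 / 2) * (1 - a), a]

/-- The second-moment matrix `T_χ = M(3/5, 1/5)` of the χ-gadget. -/
noncomputable def Tchi : Matrix (Fin 4) (Fin 4) ℝ := gadgetMatrix (3/5) (1/5)

lemma sqrt3_sq : Real.sqrt 3 ^ 2 = 3 := Real.sq_sqrt (by norm_num)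

set_option maxHeartbeats 2000000 in
/-- **The χ-gadget second-moment matrix is an exact 2-design projector**:
`T_χ = M(3/5,1/5)` is idempotent, symmetric, has trace 2, and has eigenvalues
(with multiplicity) `1, 1, 0, 0`; hence `T_χ` is an orthogonal projection of rank 2,
coinciding with the 2-qubit Haar second-moment projector. -/
theorem chi_gadget_projector :
    Tchi * Tchi = Tchi ∧
    Tchi.IsSymm ∧
    Tchi.trace = 2 ∧
    Tchi.charpoly = (X - 1) ^ 2 * X ^ 2 := by
  refine ⟨?_, ?_, ?_, ?_⟩
  · ext i j
    fin_cases i <;> fin_cases j <;>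
      simp [Tchi, gadgetMatrix, Matrix.mul_apply, Fin.sum_univ_four,
        Matrix.vecHead, Matrix.vecTail] <;>
      nlinarith [sqrt3_sq]
  · ext i j
    fin_cases i <;> fin_cases j <;>
      simp [Tchi, gadgetMatrix, Matrix.transpose_apply, Matrix.vecHead, Matrix.vecTail]
  · simp [Matrix.trace, Tchi, gadgetMatrix, Fin.sum_univ_four, Matrix.diag,
      Matrix.vecHead, Matrix.vecTail]
    norm_num
  · have hT : Tchi = !![1,0,0,0; 0,1/5,1/5,Real.sqrt 3/5; 0,1/5,1/5,Real.sqrt 3/5;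
        0,Real.sqrt 3/5,Real.sqrt 3/5,3/5] := by
      ext i j; fin_cases i <;> fin_cases j <;>
        norm_num [Tchi, gadgetMatrix, Matrix.vecHead, Matrix.vecTail] <;> ring
    rw [Matrix.charpoly, hT]
    rw [Matrix.det_succ_row_zero]
    simp [Fin.sum_univ_succ, Matrix.det_fin_three, Matrix.charmatrix_apply,
      Matrix.vecHead, Matrix.vecTail, Matrix.diagonal_apply,
      Fin.val_succ, Fin.coe_castSucc]
    ring_nf
    have h : (Real.sqrt 3 * (1/5))^2 = 3/25 := by nlinarith [sqrt3_sq]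
    simp only [← C_pow, h, ← C_mul]
    norm_num
    have h5 : (C (1/5 : ℝ)) * 5 = 1 := by
      have h : ((5:ℝ[X])) = C 5 := (map_ofNat C 5).symm
      rw [h, ← C_mul]; norm_num
    have h35 : (C (3/5 : ℝ)) = 3 * C (1/5) := by
      have h : ((3:ℝ[X])) = C 3 := (map_ofNat C 3).symm
      rw [h, ← C_mul]; norm_num
    have h325 : (C (3/25 : ℝ)) = 3 * C (1/5) * C (1/5) := by
      have h : ((3:ℝ[X])) = C 3 := (map_ofNat C 3).symm
      rw [h, ← C_mul, ← C_mul]; norm_num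
    rw [h35, h325]
    linear_combination (X^2 - X^3 : ℝ[X]) * h5
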